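/- Existence of a causal type-fixing map (Algorithm 1): let 𝒜 be a finite nonempty set, φ a symbol not in 𝒜, P a probability mass function on 𝒜, ε ∈ (0,1), and n ∈ ℕ. Set t_α = ⌊n(1−ε)P(α)⌋ for each α ∈ 𝒜 and t̄ = n − Σ_{α∈𝒜} t_α (note Σ_{α} t_α ≤ n(1−ε) ≤ n, so t̄ ≥ 0). Then there exists a map F : 𝒜^n → (𝒜 ∪ {φ})^n such that: (i) for every a^n ∈ 𝒜^n and every α ∈ 𝒜, the number of indices i ∈ [n] with F(a^n)_i = α equals t_α, and the number of indices with F(a^n)_i = φ equals t̄; (ii) for all a^n, a'^n ∈ 𝒜^n and every i ∈ [n], if a_j = a'_j for all j ≤ i, then F(a^n)_j = F(a'^n)_j for all j ≤ i; (iii) if a^n satisfies |{i ∈ [n] : a_i = α}| ≥ t_α for every α ∈ 𝒜, then F(a^n)_i ∈ {a_i, φ} for every i ∈ [n]. -/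

import Mathlib

open scoped Classical BigOperators
open Finset Filter

noncomputable section

def IsPMF {S : Type*} [Fintype S] (P : S → ℝ) : Prop :=
  (∀ s, 0 ≤ P s) ∧ ∑ s, P s = 1

def IsChannel {X Y S : Type*} [Fintype Y] (N : Y → X → S → ℝ) : Prop :=
  (∀ y x s, 0 ≤ N y x s) ∧ ∀ x s, ∑ y, N y x s = 1

def IsCondPMF {X S : Type*} [Fintype X] (PXS : X → S → ℝ) : Prop :=
  (∀ x s, 0 ≤ PXS x s) ∧ ∀ s, ∑ x, PXS x s = 1

def prodP {S : Type*} (P : S → ℝ) {n : ℕ} (s : Fin n → S) : ℝ := ∏ i, P (s i)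

def prodN {X Y S : Type*} (N : Y → X → S → ℝ) {n : ℕ}
    (y : Fin n → Y) (x : Fin n → X) (s : Fin n → S) : ℝ :=
  ∏ i, N (y i) (x i) (s i)

/-- NS-assisted coding scheme with causal CSIT: nonnegativity, normalization,
and the conditions C1, C2, C3. -/
def IsNSCa {X Y S : Type*} [Fintype X] [Fintype Y] [Fintype S] (M n : ℕ)
    (Z : (Fin n → X) → Fin M → Fin M → (Fin n → S) → (Fin n → Y) → ℝ) : Prop :=
  (∀ x wh w s y, 0 ≤ Z x wh w s y) ∧
  (∀ w s y, ∑ x, ∑ wh, Z x wh w s y = 1) ∧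
  (∀ x w s y y', ∑ wh, Z x wh w s y = ∑ wh, Z x wh w s y') ∧
  (∀ wh w w' s s' y, ∑ x, Z x wh w s y = ∑ x, Z x wh w' s' y) ∧
  (∀ i : ℕ, 1 ≤ i → i < n →
    ∀ (x : Fin n → X) wh w s s' y, (∀ j : Fin n, (j : ℕ) < i → s j = s' j) →
      ∑ x' ∈ univ.filter (fun x' : Fin n → X => ∀ j : Fin n, (j : ℕ) < i → x' j = x j),
        Z x' wh w s y =
      ∑ x' ∈ univ.filter (fun x' : Fin n → X => ∀ j : Fin n, (j : ℕ) < i → x' j = x j),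
        Z x' wh w s' y)

def etaNS {X Y S : Type*} [Fintype X] [Fintype Y] [Fintype S]
    (N : Y → X → S → ℝ) (P : S → ℝ) (M n : ℕ)
    (Z : (Fin n → X) → Fin M → Fin M → (Fin n → S) → (Fin n → Y) → ℝ) : ℝ :=
  (1 / (M : ℝ)) * ∑ w, ∑ x, ∑ s, ∑ y, prodP P s * prodN N y x s * Z x w w s y

def etaNSOpt {X Y S : Type*} [Fintype X] [Fintype Y] [Fintype S]
    (N : Y → X → S → ℝ) (P : S → ℝ) (M n : ℕ) : ℝ :=
  sSup {e : ℝ | ∃ Z : (Fin n → X) → Fin M → Fin M → (Fin n → S) → (Fin n → Y) → ℝ,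
    IsNSCa M n Z ∧ etaNS N P M n Z = e}

/-- The length-`(j+1)` prefix `s^{j+1}` of a state sequence. -/
def prefixS {S : Type*} {n : ℕ} (s : Fin n → S) (j : Fin n) : Fin ((j : ℕ) + 1) → S :=
  fun k => s ⟨k, Nat.lt_of_le_of_lt (Nat.le_of_lt_succ k.isLt) j.isLt⟩

/-- A classical coding scheme with causal CSIT. -/
structure ClassicalCa (X S Y : Type*) [Fintype X] (M n : ℕ) where
  Q : Type
  fq : Fintype Q
  PQ : Q → ℝ
  E : (j : Fin n) → X → (Fin (j : ℕ) → X) → Fin M → (Fin ((j : ℕ) + 1) → S) → Q → ℝ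
  D : Fin M → (Fin n → Y) → Q → ℝ
  PQ_nonneg : ∀ q, 0 ≤ PQ q
  PQ_sum : ∑ q ∈ @Finset.univ Q fq, PQ q = 1
  E_nonneg : ∀ j xj h w sj q, 0 ≤ E j xj h w sj q
  E_sum : ∀ j h w sj q, ∑ xj, E j xj h w sj q = 1
  D_nonneg : ∀ wh y q, 0 ≤ D wh y q
  D_sum : ∀ y q, ∑ wh, D wh y q = 1

def etaC {X Y S : Type*} [Fintype X] [Fintype Y] [Fintype S]
    (N : Y → X → S → ℝ) (P : S → ℝ) (M n : ℕ) (C : ClassicalCa X S Y M n) : ℝ :=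
  (1 / (M : ℝ)) * ∑ w : Fin M, ∑ q ∈ @Finset.univ C.Q C.fq, C.PQ q *
    ∑ x : Fin n → X, ∑ s : Fin n → S, ∑ y : Fin n → Y,
      prodP P s *
      (∏ j, C.E j (x j) (fun k => x ⟨k, k.isLt.trans j.isLt⟩) w (prefixS s j) q) *
      prodN N y x s * C.D w y q

def etaCOpt {X Y S : Type*} [Fintype X] [Fintype Y] [Fintype S]
    (N : Y → X → S → ℝ) (P : S → ℝ) (M n : ℕ) : ℝ :=
  sSup {e : ℝ | ∃ C : ClassicalCa X S Y M n, etaC N P M n C = e}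

/-- Conditional mutual information I(X;Y|S) for the joint distribution
P_{XYS}(x,y,s) = P_S(s) P_{X|S}(x|s) N(y|x,s), in bits. -/
def condMI {X Y S : Type*} [Fintype X] [Fintype Y] [Fintype S]
    (N : Y → X → S → ℝ) (P : S → ℝ) (PXS : X → S → ℝ) : ℝ :=
  ∑ x, ∑ y, ∑ s,
    (P s * PXS x s * N y x s) *
      Real.logb 2 ((P s * PXS x s * N y x s) * P s /
        ((∑ y', P s * PXS x s * N y' x s) * (∑ x', P s * PXS x' s * N y x' s)))

/-- Transition function of the Z0/Z1 channel (arguments: output, input, state). -/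
def NZ (y x s : Bool) : ℝ := if x = s then (if y = x then 1 else 0) else 1 / 2

/-- The uniform state distribution of the Z0/Z1 channel. -/
def PZ (_ : Bool) : ℝ := 1 / 2

/-- The channel with CSIR associated to a channel with state. -/
def NCSIR {X Y S : Type*} (N : Y → X → S → ℝ) : (Y × S) → X → S → ℝ :=
  fun ys x s => if ys.2 = s then N ys.1 x s else 0


section AuxAlg1

set_option linter.unusedSectionVars false

variable {A : Type*} [Fintype A]

noncomputable def stepOut (d : A → ℕ) (nd : ℕ) (x : A) : Option A :=
  if 0 < d x then some x
  else if 0 < nd then none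
  else if h : ∃ β, 0 < d β then some h.choose else none

noncomputable def updD (d : A → ℕ) : Option A → (A → ℕ)
  | none => d
  | some x => Function.update d x (d x - 1)

def updND (nd : ℕ) : Option A → ℕ
  | none => nd - 1
  | some _ => nd

@[simp] lemma updD_none (d : A → ℕ) : updD d none = d := rfl
@[simp] lemma updD_some (d : A → ℕ) (x : A) :
    updD d (some x) = Function.update d x (d x - 1) := rfl
@[simp] lemma updND_none (nd : ℕ) : updND (A := A) nd none = nd - 1 := rfl
@[simp] lemma updND_some (nd : ℕ) (x : A) : updND nd (some x) = nd := rfl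

noncomputable def process (d : A → ℕ) (nd : ℕ) : List A → List (Option A)
  | [] => []
  | x :: xs => stepOut d nd x :: process (updD d (stepOut d nd x)) (updND nd (stepOut d nd x)) xs

lemma length_process (d : A → ℕ) (nd : ℕ) (l : List A) :
    (process d nd l).length = l.length := by
  induction l generalizing d nd with
  | nil => rfl
  | cons x xs ih => simp [process, ih]

lemma exists_pos_of_sum_pos (d : A → ℕ) (h : ∑ α, d α ≠ 0) : ∃ β, 0 < d β := by
  by_contra hc
  push_neg at hc
  exact h (Finset.sum_eq_zero fun α _ => by have := hc α; omega)

lemma stepOut_spec (d : A → ℕ) (nd : ℕ) (x : A) (hpos : 0 < (∑ α, d α) + nd) :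
    (∃ β, stepOut d nd x = some β ∧ 0 < d β) ∨ (stepOut d nd x = none ∧ 0 < nd) := by
  unfold stepOut
  split_ifs with h1 h2 h3
  · exact Or.inl ⟨x, rfl, h1⟩
  · exact Or.inr ⟨rfl, h2⟩
  · exact Or.inl ⟨h3.choose, rfl, h3.choose_spec⟩
  · exfalso
    have : ∑ α, d α ≠ 0 := by omega
    exact h3 (exists_pos_of_sum_pos d this)

lemma sum_updD_some (d : A → ℕ) (β : A) (hβ : 0 < d β) :
    ∑ α, updD d (some β) α = (∑ α, d α) - 1 := by
  simp only [updD]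
  rw [Finset.sum_update_of_mem (Finset.mem_univ β)]
  have : ∑ α, d α = d β + ∑ α ∈ univ \ {β}, d α := by
    rw [Finset.sum_eq_add_sum_sdiff_singleton_of_mem (Finset.mem_univ β)]
  omega

lemma count_process (l : List A) : ∀ (d : A → ℕ) (nd : ℕ),
    (∑ α, d α) + nd = l.length →
    (∀ α, (process d nd l).count (some α) = d α) ∧ (process d nd l).count none = nd := by
  induction l with
  | nil =>
    intro d nd h
    simp only [List.length_nil] at h
    have hd : ∀ α, d α = 0 := by
      intro α
      have h1 : d α ≤ ∑ β, d β := Finset.single_le_sum (f := d) (fun _ _ => Nat.zero_le _) (mem_univ α)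
      omega
    refine ⟨fun α => ?_, ?_⟩ <;> simp [process, hd]
    omega
  | cons x xs ih =>
    intro d nd h
    have hpos : 0 < (∑ α, d α) + nd := by simp at h; omega
    have hlen : (∑ α, d α) + nd = xs.length + 1 := by simpa using h
    rcases stepOut_spec d nd x hpos with ⟨β, ho, hβ⟩ | ⟨ho, hnd⟩
    · have hβs : d β ≤ ∑ α, d α :=
        Finset.single_le_sum (f := d) (fun _ _ => Nat.zero_le _) (mem_univ β)
      have hsum : (∑ α, updD d (some β) α) + nd = xs.length := by
        rw [sum_updD_some d β hβ]; omega
      obtain ⟨ih1, ih2⟩ := ih _ _ hsum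
      refine ⟨fun α => ?_, ?_⟩
      · simp only [process, ho, updND_some, List.count_cons, ih1]
        by_cases hab : α = β
        · subst hab
          simp only [updD_some, Function.update_self, beq_self_eq_true, if_pos rfl]
          simp
          omega
        · have hba : (some β == some α) = false := by
            simp [beq_eq_false_iff_ne]; exact fun hc => hab hc.symm
          simp only [updD_some, Function.update_of_ne hab, hba, if_false]
          simp [Ne.symm hab]
      · simp only [process, ho, updND_some, List.count_cons, ih2]
        simp
    · have hsum : (∑ α, updD d none α) + (nd - 1) = xs.length := by
        simp only [updD_none]; omega
      obtain ⟨ih1, ih2⟩ := ih _ _ hsum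
      refine ⟨fun α => ?_, ?_⟩
      · simp only [process, ho, updND_none, List.count_cons, updD_none] at ih1 ⊢
        simp [ih1]
      · simp only [updD_none] at ih2
        simp only [process, ho, updND_none, List.count_cons, updD_none, ih2]
        simp
        omega

lemma take_process (l : List A) : ∀ (l' : List A) (d : A → ℕ) (nd k : ℕ),
    l.take k = l'.take k → (process d nd l).take k = (process d nd l').take k := by
  induction l with
  | nil => intro l' d nd k h
           cases k with
           | zero => simp
           | succ m =>
             cases l' with
             | nil => rfl
             | cons y ys => simp at h
  | cons x xs ih =>
    intro l' d nd k h
    cases k with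
    | zero => simp
    | succ m =>
      cases l' with
      | nil => simp at h
      | cons y ys =>
        simp only [List.take_succ_cons, List.cons.injEq] at h
        obtain ⟨rfl, htail⟩ := h
        simp only [process, List.take_succ_cons]
        rw [ih ys _ _ m htail]

lemma sum_count_eq_length (l : List A) : ∑ α, l.count α = l.length := by
  induction l with
  | nil => simp
  | cons z zs ihz =>
    simp only [List.count_cons, List.length_cons, ← ihz]
    rw [Finset.sum_add_distrib]
    simp [Finset.sum_ite_eq]

lemma stepOut_cases (d : A → ℕ) (nd : ℕ) (x : A) (xs : List A)
    (hle : ∀ α, d α ≤ (x :: xs).count α) (hsum : (∑ α, d α) + nd = (x :: xs).length) :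
    (stepOut d nd x = some x ∧ 0 < d x) ∨ (stepOut d nd x = none ∧ 0 < nd ∧ ¬ 0 < d x) := by
  unfold stepOut
  split_ifs with h1 h2 h3
  · exact Or.inl ⟨rfl, h1⟩
  · exact Or.inr ⟨rfl, h2, h1⟩
  all_goals exfalso
  all_goals {
    have hlt : ∑ α, d α < ∑ α, (x :: xs).count α :=
      Finset.sum_lt_sum (fun α _ => hle α)
        ⟨x, mem_univ x, by rw [List.count_cons_self]; omega⟩
    rw [sum_count_eq_length] at hlt
    omega }

lemma process_mem (l : List A) : ∀ (d : A → ℕ) (nd : ℕ),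
    (∀ α, d α ≤ l.count α) → (∑ α, d α) + nd = l.length →
    ∀ (i : ℕ) (h : i < l.length),
      (process d nd l).get ⟨i, by rw [length_process]; exact h⟩ = some (l.get ⟨i, h⟩) ∨
      (process d nd l).get ⟨i, by rw [length_process]; exact h⟩ = none := by
  induction l with
  | nil => intro d nd _ _ i h; simp at h
  | cons x xs ih =>
    intro d nd hle hsum i h
    rcases stepOut_cases d nd x xs hle hsum with ⟨ho, hdx⟩ | ⟨ho, hnd, hdx⟩
    · cases i with
      | zero => simp [process, ho]
      | succ m =>
        have hm : m < xs.length := by simpa using h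
        have hle' : ∀ α, updD d (some x) α ≤ xs.count α := by
          intro α
          by_cases hax : α = x
          · subst hax
            have hx1 := hle α
            rw [List.count_cons_self] at hx1
            simp only [updD_some, Function.update_self]
            omega
          · simp only [updD_some, Function.update_of_ne hax]
            have hx1 := hle α
            rwa [List.count_cons_of_ne (by exact fun hc => hax hc.symm)] at hx1
        have hxs : d x ≤ ∑ α, d α :=
          Finset.single_le_sum (f := d) (fun _ _ => Nat.zero_le _) (mem_univ x)
        have hsum' : (∑ α, updD d (some x) α) + updND nd (some x) = xs.length := by
          simp only [updND_some, sum_updD_some d x hdx]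
          simp only [List.length_cons] at hsum; omega
        have := ih _ _ hle' hsum' m hm
        simpa [process, ho] using this
    · cases i with
      | zero => simp [process, ho]
      | succ m =>
        have hm : m < xs.length := by simpa using h
        have hle' : ∀ α, updD d none α ≤ xs.count α := by
          intro α
          by_cases hax : α = x
          · subst hax; simp only [updD_none]; omega
          · simp only [updD]
            have hx1 := hle α
            rwa [List.count_cons_of_ne (by exact fun hc => hax hc.symm)] at hx1
        have hsum' : (∑ α, updD d none α) + updND (A := A) nd none = xs.length := by
          simp only [updND_none, updD_none]; simp only [List.length_cons] at hsum; omega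
        have := ih _ _ hle' hsum' m hm
        simpa [process, ho] using this

lemma card_filter_eq_count {B : Type*} [DecidableEq B] (n : ℕ) (f : Fin n → B) (v : B) :
    (univ.filter fun i => f i = v).card = (List.ofFn f).count v := by
  induction n with
  | zero => simp
  | succ m ih =>
    rw [List.ofFn_succ, List.count_cons, Fin.card_filter_univ_succ' (p := fun i => f i = v), ih]
    simp [add_comm, beq_iff_eq]

lemma count_congr_beq {B : Type*} (i1 i2 : BEq B) [@LawfulBEq B i1] [@LawfulBEq B i2]
    (l : List B) (v : B) : @List.count B i1 v l = @List.count B i2 v l := by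
  induction l with
  | nil => rfl
  | cons z zs ih => simp [List.count_cons, ih]

lemma card_filter_get_eq_count {B : Type*} [DecidableEq B] (l : List B) (n : ℕ)
    (hn : l.length = n) (v : B) :
    (univ.filter fun i : Fin n => l.get ⟨i, hn ▸ i.isLt⟩ = v).card = l.count v := by
  subst hn
  have h := card_filter_eq_count l.length (fun i => l.get i) v
  rw [List.ofFn_get] at h
  simpa using h


end AuxAlg1

/-- Existence of a causal type-fixing map (Algorithm 1). The
symbol `φ` is modelled by `none : Option A`. With `t α = ⌊n(1-ε)P(α)⌋` and
`t̄ = n - Σ_α t α`: (i) every output sequence has exactly `t α` entries equal to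
`some α` and `t̄` entries equal to `none`; (ii) the map is causal; (iii) if the
input has at least `t α` entries equal to `α` for every `α`, then every output
entry is the corresponding input entry or `none`. -/
theorem causal_type_fixing_map_exists {A : Type*} [Fintype A] [Nonempty A]
    (P : A → ℝ) (hP : IsPMF P) (ε : ℝ) (hε0 : 0 < ε) (hε1 : ε < 1) (n : ℕ) :
    ∃ F : (Fin n → A) → (Fin n → Option A),
      (∀ (a : Fin n → A) (α : A),
          (univ.filter fun i => F a i = some α).card = ⌊(n : ℝ) * (1 - ε) * P α⌋₊) ∧
      (∀ a : Fin n → A,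
          (univ.filter fun i => F a i = none).card
            = n - ∑ α : A, ⌊(n : ℝ) * (1 - ε) * P α⌋₊) ∧
      (∀ a a' : Fin n → A, ∀ i : Fin n, (∀ j : Fin n, j ≤ i → a j = a' j) →
          ∀ j : Fin n, j ≤ i → F a j = F a' j) ∧
      (∀ a : Fin n → A,
          (∀ α : A, ⌊(n : ℝ) * (1 - ε) * P α⌋₊ ≤ (univ.filter fun i => a i = α).card) →
          ∀ i : Fin n, F a i = some (a i) ∨ F a i = none) := by
  classical
  set t : A → ℕ := fun α => ⌊(n : ℝ) * (1 - ε) * P α⌋₊ with ht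
  have hnn : ∀ α, (0:ℝ) ≤ (n : ℝ) * (1 - ε) * P α := by
    intro α
    have h1 := hP.1 α
    have h2 : (0:ℝ) ≤ (n:ℝ) := Nat.cast_nonneg n
    exact mul_nonneg (mul_nonneg h2 (by linarith)) h1
  have hT : ∑ α, t α ≤ n := by
    have h1 : ((∑ α, t α : ℕ) : ℝ) ≤ (n : ℝ) := by
      push_cast
      calc ∑ α, ((t α : ℕ) : ℝ) ≤ ∑ α, (n : ℝ) * (1 - ε) * P α :=
            Finset.sum_le_sum fun α _ => Nat.floor_le (hnn α)
        _ = (n : ℝ) * (1 - ε) := by rw [← Finset.mul_sum, hP.2, mul_one]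
        _ ≤ n := by nlinarith [Nat.cast_nonneg (α := ℝ) n]
    exact_mod_cast h1
  set nd := n - ∑ α, t α with hnd
  have hsum0 : ∀ a : Fin n → A, (∑ α, t α) + nd = (List.ofFn a).length := by
    intro a; rw [List.length_ofFn]; omega
  have hlen : ∀ a : Fin n → A, (process t nd (List.ofFn a)).length = n := by
    intro a; rw [length_process, List.length_ofFn]
  refine ⟨fun a i => (process t nd (List.ofFn a)).get ⟨i, by rw [hlen a]; exact i.isLt⟩,
    ?_, ?_, ?_, ?_⟩
  · intro a α
    rw [card_filter_get_eq_count _ n (hlen a) (some α)]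
    exact (count_congr_beq _ _ _ _).trans ((count_process (List.ofFn a) t nd (hsum0 a)).1 α)
  · intro a
    rw [card_filter_get_eq_count _ n (hlen a) none]
    exact (count_congr_beq _ _ _ _).trans (count_process (List.ofFn a) t nd (hsum0 a)).2
  · intro a a' i hagree j hj
    have htake : (List.ofFn a).take ((i : ℕ) + 1) = (List.ofFn a').take ((i : ℕ) + 1) := by
      apply List.ext_getElem
      · simp
      · intro m h1 h2
        have hm : m < n := by simp at h1; omega
        rw [List.getElem_take, List.getElem_take, List.getElem_ofFn, List.getElem_ofFn]
        have hmi : m ≤ (i : ℕ) := by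
          simp [List.length_take] at h1; omega
        exact hagree ⟨m, hm⟩ (by exact hmi)
    have h2 := take_process (List.ofFn a) (List.ofFn a') t nd ((i : ℕ) + 1) htake
    have hj1 : (j : ℕ) < (i : ℕ) + 1 := by omega
    have e0 := congrArg (fun l => l[(j : ℕ)]?) h2
    simp only [List.getElem?_take_of_lt hj1] at e0
    have hja : (j:ℕ) < (process t nd (List.ofFn a)).length := by rw [hlen a]; exact j.isLt
    have hja' : (j:ℕ) < (process t nd (List.ofFn a')).length := by rw [hlen a']; exact j.isLt
    rw [List.getElem?_eq_getElem hja, List.getElem?_eq_getElem hja'] at e0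
    simpa [List.get_eq_getElem] using e0
  · intro a hcount i
    have hle : ∀ α, t α ≤ (List.ofFn a).count α := by
      intro α
      have := hcount α
      rwa [card_filter_eq_count n a α] at this
    have h := process_mem (List.ofFn a) t nd hle (hsum0 a) (i : ℕ)
      (by rw [List.length_ofFn]; exact i.isLt)
    rcases h with h | h
    · left
      rw [List.get_ofFn] at h
      simpa using h
    · right
      simpa using h


end
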